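/- Let (Ω, 𝔄, μ) be a measure space, let p, ȳ, y : Ω → ℝ be measurable, let ε ∈ (0,1), c_s > 0, and M ≥ 0. Assume: (a) |p(x)| ≤ M for μ-a.e. x; (b) p vanishes μ-a.e. on {ȳ = 0}, i.e., μ({ȳ = 0} ∩ {p ≠ 0}) = 0; (c) |y(x) − ȳ(x)| ≤ ε for μ-a.e. x; and (d) μ({x : 0 < |ȳ(x)| < ε}) ≤ c_s·ε. Then the function p·y·(𝟙_{ȳ≥0} − 𝟙_{y≥0}) is μ-integrable and |∫_Ω p·y·(𝟙_{ȳ≥0} − 𝟙_{y≥0}) dμ| ≤ c_s·M·ε². -/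

import Mathlib

open MeasureTheory

/-- Under the vanishing condition for `p` on `{ȳ = 0}`, the closeness condition
`|y − ȳ| ≤ ε` a.e., and the structural assumption at level `ε`, the function
`p·y·(𝟙_{ȳ≥0} − 𝟙_{y≥0})` is integrable and its integral is bounded by
`c_s·M·ε²`. -/
theorem zeta_integral_bound
    {Ω : Type*} [MeasurableSpace Ω] (μ : Measure Ω)
    (p ybar y : Ω → ℝ)
    (hp : Measurable p) (hybar : Measurable ybar) (hy : Measurable y)
    (ε c_s M : ℝ) (hε0 : 0 < ε) (hε1 : ε < 1) (hcs : 0 < c_s) (hM : 0 ≤ M)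
    (hpbd : ∀ᵐ x ∂μ, |p x| ≤ M)
    (hvanish : μ {x | ybar x = 0 ∧ p x ≠ 0} = 0)
    (hclose : ∀ᵐ x ∂μ, |y x - ybar x| ≤ ε)
    (hstruct : μ {x | 0 < |ybar x| ∧ |ybar x| < ε} ≤ ENNReal.ofReal (c_s * ε)) :
    Integrable (fun x =>
        p x * y x * (Set.indicator {x | 0 ≤ ybar x} (1 : Ω → ℝ) x
          - Set.indicator {x | 0 ≤ y x} (1 : Ω → ℝ) x)) μ ∧
    |∫ x, p x * y x * (Set.indicator {x | 0 ≤ ybar x} (1 : Ω → ℝ) x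
          - Set.indicator {x | 0 ≤ y x} (1 : Ω → ℝ) x) ∂μ|
      ≤ c_s * M * ε ^ 2 := by
  set S : Set Ω := {x | 0 < |ybar x| ∧ |ybar x| < ε} with hS
  have hSm : MeasurableSet S :=
    (measurableSet_lt measurable_const hybar.abs).inter
      (measurableSet_lt hybar.abs measurable_const)
  set f : Ω → ℝ := fun x =>
      p x * y x * (Set.indicator {x | 0 ≤ ybar x} (1 : Ω → ℝ) x
        - Set.indicator {x | 0 ≤ y x} (1 : Ω → ℝ) x) with hf
  have hvanish' : ∀ᵐ x ∂μ, ybar x = 0 → p x = 0 := by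
    have hset : {x | ¬(ybar x = 0 → p x = 0)} = {x | ybar x = 0 ∧ p x ≠ 0} := by
      ext x; exact Classical.not_imp
    rw [ae_iff, hset, hvanish]
  have hbd : ∀ᵐ x ∂μ, ‖f x‖ ≤ S.indicator (fun _ => M * ε) x := by
    filter_upwards [hpbd, hclose, hvanish'] with x hpx hcx hvx
    have hind : 0 ≤ S.indicator (fun _ => M * ε) x :=
      Set.indicator_nonneg (fun _ _ => by positivity) x
    rw [abs_le] at hcx
    obtain ⟨hc1, hc2⟩ := hcx
    by_cases h1 : 0 ≤ ybar x <;> by_cases h2 : 0 ≤ y x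
    · have e1 : Set.indicator {x | 0 ≤ ybar x} (1 : Ω → ℝ) x = 1 :=
        Set.indicator_of_mem h1 1
      have e2 : Set.indicator {x | 0 ≤ y x} (1 : Ω → ℝ) x = 1 :=
        Set.indicator_of_mem h2 1
      simp only [hf, e1, e2, sub_self, mul_zero, norm_zero]
      exact hind
    · -- ybar ≥ 0, y < 0
      push_neg at h2
      have e1 : Set.indicator {x | 0 ≤ ybar x} (1 : Ω → ℝ) x = 1 :=
        Set.indicator_of_mem h1 1
      have e2 : Set.indicator {x | 0 ≤ y x} (1 : Ω → ℝ) x = 0 :=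
        Set.indicator_of_notMem (not_le.mpr h2) 1
      by_cases hz : ybar x = 0
      · simp only [hf, hvx hz, zero_mul, norm_zero]
        exact hind
      · have hxS : x ∈ S :=
          ⟨abs_pos.mpr hz, by rw [abs_of_nonneg h1]; linarith⟩
        rw [Set.indicator_of_mem hxS]
        simp only [hf, e1, e2, sub_zero, mul_one]
        rw [Real.norm_eq_abs, abs_mul]
        have hyb : |y x| ≤ ε := by rw [abs_of_neg h2]; linarith
        exact mul_le_mul hpx hyb (abs_nonneg _) hM
    · -- ybar < 0, y ≥ 0
      push_neg at h1
      have e1 : Set.indicator {x | 0 ≤ ybar x} (1 : Ω → ℝ) x = 0 :=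
        Set.indicator_of_notMem (not_le.mpr h1) 1
      have e2 : Set.indicator {x | 0 ≤ y x} (1 : Ω → ℝ) x = 1 :=
        Set.indicator_of_mem h2 1
      by_cases hz : y x = 0
      · simp only [hf, hz, mul_zero, zero_mul, norm_zero]
        exact hind
      · have hy0 : 0 < y x := lt_of_le_of_ne h2 (Ne.symm hz)
        have hxS : x ∈ S :=
          ⟨abs_pos.mpr (ne_of_lt h1), by rw [abs_of_neg h1]; linarith⟩
        rw [Set.indicator_of_mem hxS]
        simp only [hf, e1, e2, zero_sub, mul_neg, mul_one, norm_neg]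
        rw [Real.norm_eq_abs, abs_mul]
        have hyb : |y x| ≤ ε := by rw [abs_of_pos hy0]; linarith
        exact mul_le_mul hpx hyb (abs_nonneg _) hM
    · have e1 : Set.indicator {x | 0 ≤ ybar x} (1 : Ω → ℝ) x = 0 :=
        Set.indicator_of_notMem h1 1
      have e2 : Set.indicator {x | 0 ≤ y x} (1 : Ω → ℝ) x = 0 :=
        Set.indicator_of_notMem h2 1
      simp only [hf, e1, e2, sub_self, mul_zero, norm_zero]
      exact hind
  have hgint : Integrable (S.indicator (fun _ => M * ε)) μ := by
    rw [integrable_indicator_iff hSm]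
    exact (integrableOn_const_iff).mpr (Or.inr (lt_of_le_of_lt hstruct ENNReal.ofReal_lt_top))
  have hfm : Measurable f :=
    (hp.mul hy).mul
      ((measurable_one.indicator (measurableSet_le measurable_const hybar)).sub
        (measurable_one.indicator (measurableSet_le measurable_const hy)))
  have hfint : Integrable f μ := hgint.mono' hfm.aestronglyMeasurable hbd
  refine ⟨hfint, ?_⟩
  have hμS : (μ S).toReal ≤ c_s * ε :=
    ENNReal.toReal_le_of_le_ofReal (by positivity) hstruct
  calc |∫ x, f x ∂μ| ≤ ∫ x, ‖f x‖ ∂μ := by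
        simpa using norm_integral_le_integral_norm f (μ := μ)
    _ ≤ ∫ x, S.indicator (fun _ => M * ε) x ∂μ :=
        integral_mono_ae hfint.norm hgint hbd
    _ = (μ S).toReal * (M * ε) := by
        rw [integral_indicator_const _ hSm, smul_eq_mul, measureReal_def]
    _ ≤ (c_s * ε) * (M * ε) := mul_le_mul_of_nonneg_right hμS (by positivity)
    _ = c_s * M * ε ^ 2 := by ring
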